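/- Let u be an aperiodic sequence over a finite alphabet A. Then there exist a sequence x : ℕ → A and two distinct letters a, b ∈ A such that for every n ∈ ℕ, writing f = x(0)x(1)⋯x(n−1) for the prefix of x of length n, both words af and bf occur infinitely many times in u. -/

import Mathlib

namespace ReflPaper

variable {A : Type*}

/-- The factor of `u` of length `n` at position `i`: `u(i) u(i+1) ⋯ u(i+n-1)`. -/
def factorAt (u : ℕ → A) (n i : ℕ) : List A :=
  (List.range n).map (fun k => u (i + k))

/-- The word `w` occurs in the sequence `u` at position `i`. -/
def OccursAt (u : ℕ → A) (w : List A) (i : ℕ) : Prop :=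
  w = factorAt u w.length i

/-- The language of `u`: the set of all factors of `u`. -/
def Lang (u : ℕ → A) : Set (List A) := {w | ∃ i, OccursAt u w i}

/-- The set of factors of `u` of length `n`. -/
def LangN (u : ℕ → A) (n : ℕ) : Set (List A) := {w | w.length = n ∧ w ∈ Lang u}

/-- The word `w` occurs infinitely many times in `u`. -/
def OccursInf (u : ℕ → A) (w : List A) : Prop := {i | OccursAt u w i}.Infinite

/-- `u` is eventually periodic. -/
def EventuallyPeriodic (u : ℕ → A) : Prop :=
  ∃ N p : ℕ, 1 ≤ p ∧ ∀ i, N ≤ i → u (i + p) = u i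

/-- Two words are reflectively equivalent if one equals the other or its reversal. -/
def ReflEquiv (w v : List A) : Prop := w = v ∨ w = v.reverse

/-- Reflective equivalence as a setoid on words. -/
def reflSetoid (A : Type*) : Setoid (List A) where
  r := ReflEquiv
  iseqv := by
    constructor
    · intro w; exact Or.inl rfl
    · intro w v h
      rcases h with h | h
      · exact Or.inl h.symm
      · subst h; simp [ReflEquiv]
    · intro w v x h1 h2
      rcases h1 with h1 | h1 <;> rcases h2 with h2 | h2 <;> subst h1 <;>
        simp [ReflEquiv, h2]

/-- The number of reflective-equivalence classes of words in a set `S`. -/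
noncomputable def nClasses (S : Set (List A)) : ℕ :=
  Set.ncard (Quotient.mk (reflSetoid A) '' S)

/-- The reflection complexity `r_u(n)`. -/
noncomputable def reflComplexity (u : ℕ → A) (n : ℕ) : ℕ := nClasses (LangN u n)

/-- The factor complexity `C_u(n) = #L_n(u)`. -/
noncomputable def factorComplexity (u : ℕ → A) (n : ℕ) : ℕ := (LangN u n).ncard

/-- The palindromic complexity `P_u(n)`. -/
noncomputable def palComplexity (u : ℕ → A) (n : ℕ) : ℕ :=
  Set.ncard {w ∈ LangN u n | w.reverse = w}

/-- Both-sided extensions of `w` in the language of `u`. -/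
def Bext (u : ℕ → A) (w : List A) : Set (List A) :=
  {x ∈ Lang u | ∃ a b : A, x = a :: (w ++ [b])}

/-- Right extensions of `w` in the language of `u`. -/
def Rext (u : ℕ → A) (w : List A) : Set (List A) :=
  {x ∈ Lang u | ∃ a : A, x = w ++ [a]}

/-- `T(w)`: the number of reflective-equivalence classes of `Bext(w) ∪ Bext(w̄)`. -/
noncomputable def TT (u : ℕ → A) (w : List A) : ℕ :=
  nClasses (Bext u w ∪ Bext u w.reverse)

/-- `w` is a right special factor of `u`. -/
def RightSpecial (u : ℕ → A) (w : List A) : Prop :=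
  ∃ a b : A, a ≠ b ∧ w ++ [a] ∈ Lang u ∧ w ++ [b] ∈ Lang u

/-- `w` is a left special factor of `u`. -/
def LeftSpecial (u : ℕ → A) (w : List A) : Prop :=
  ∃ a b : A, a ≠ b ∧ a :: w ∈ Lang u ∧ b :: w ∈ Lang u

/-- `u` is Sturmian: `C_u(n) = n + 1` for all `n`. -/
def Sturmian (u : ℕ → A) : Prop := ∀ n, factorComplexity u n = n + 1

/-- `u` is quasi-Sturmian: `C_u(n) = n + c` eventually. -/
def QuasiSturmian (u : ℕ → A) : Prop :=
  ∃ n₀ c : ℕ, ∀ n, n₀ ≤ n → factorComplexity u n = n + c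


section Aux

variable (u : ℕ → A)

lemma factorAt_length (n i : ℕ) : (factorAt u n i).length = n := by
  simp [factorAt]

lemma occursAt_factorAt (n i : ℕ) : OccursAt u (factorAt u n i) i := by
  simp [OccursAt, factorAt_length]

lemma factorAt_succ_left (n i : ℕ) : factorAt u (n+1) i = u i :: factorAt u n (i+1) := by
  unfold factorAt
  rw [List.range_succ_eq_map, List.map_cons, List.map_map]
  simp only [Nat.add_zero]
  congr 1
  apply List.map_congr_left
  intro k _
  simp only [Function.comp_apply]
  congr 1
  omega

lemma factorAt_succ_right (n i : ℕ) : factorAt u (n+1) i = factorAt u n i ++ [u (i+n)] := by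
  unfold factorAt
  rw [List.range_succ, List.map_append]
  rfl

lemma factorAt_add (m n i : ℕ) :
    factorAt u (m + n) i = factorAt u m i ++ factorAt u n (i + m) := by
  induction n with
  | zero => simp [factorAt]
  | succ n ih =>
    rw [show m + (n + 1) = (m + n) + 1 from rfl, factorAt_succ_right, ih,
      factorAt_succ_right, List.append_assoc, show i + (m + n) = i + m + n from by omega]

lemma occursAt_prefix {w p : List A} {i : ℕ} (h : OccursAt u w i) (hp : p <+: w) :
    OccursAt u p i := by
  obtain ⟨q, rfl⟩ := hp
  rw [OccursAt, List.length_append, factorAt_add] at h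
  exact (List.append_inj h (by rw [factorAt_length])).1

lemma occursInf_prefix {w p : List A} (h : OccursInf u w) (hp : p <+: w) : OccursInf u p :=
  h.mono fun i hi => occursAt_prefix u hi hp

lemma occursAt_cons {a : A} {w : List A} {i : ℕ} :
    OccursAt u (a :: w) i ↔ u i = a ∧ OccursAt u w (i + 1) := by
  rw [OccursAt, List.length_cons, factorAt_succ_left, OccursAt]
  constructor
  · intro h
    obtain ⟨h1, h2⟩ := List.cons.injEq .. ▸ h
    exact ⟨h1.symm, h2⟩
  · rintro ⟨h1, h2⟩
    rw [← h1, ← h2]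

lemma occursAt_concat {w : List A} {c : A} {i : ℕ} :
    OccursAt u (w ++ [c]) i ↔ OccursAt u w i ∧ u (i + w.length) = c := by
  rw [OccursAt, List.length_append, List.length_singleton, factorAt_succ_right]
  constructor
  · intro h
    obtain ⟨h1, h2⟩ := List.append_inj h (by rw [factorAt_length])
    refine ⟨h1, ?_⟩
    have := (List.cons.injEq .. ▸ h2).1
    exact this.symm
  · rintro ⟨h1, rfl⟩
    exact congrArg (fun t => t ++ [u (i + w.length)]) h1

lemma occursInf_of_cons {a : A} {w : List A} (h : OccursInf u (a :: w)) : OccursInf u w := by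
  have hinj : Set.InjOn (· + 1) {i | OccursAt u (a :: w) i} := fun x _ y _ hxy => by
    simpa using hxy
  refine ((h.image hinj)).mono ?_
  rintro _ ⟨i, hi, rfl⟩
  exact ((occursAt_cons u).1 hi).2

lemma occursInf_of_concat {c : A} {w : List A} (h : OccursInf u (w ++ [c])) :
    OccursInf u w :=
  h.mono fun i hi => ((occursAt_concat u).1 hi).1

lemma pigeon {β : Type*} [Finite β] {S : Set ℕ} (hS : S.Infinite) (f : ℕ → β) :
    ∃ b, {i | i ∈ S ∧ f i = b}.Infinite := by
  by_contra h
  push_neg at h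
  have hsub : S ⊆ ⋃ b : β, {i | i ∈ S ∧ f i = b} := fun i hi =>
    Set.mem_iUnion.2 ⟨f i, hi, rfl⟩
  exact hS (Set.Finite.subset (Set.finite_iUnion h) hsub)

lemma exists_cons_occursInf [Finite A] {w : List A} (h : OccursInf u w) :
    ∃ a, OccursInf u (a :: w) := by
  have h' : ({i | OccursAt u w i} \ {0}).Infinite := h.diff (Set.finite_singleton 0)
  obtain ⟨a, ha⟩ := pigeon h' (fun i => u (i - 1))
  refine ⟨a, ?_⟩
  have hinj : Set.InjOn (· - 1) {i | i ∈ {i | OccursAt u w i} \ {0} ∧ u (i - 1) = a} := by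
    intro x hx y hy hxy
    have hx0 : x ≠ 0 := hx.1.2
    have hy0 : y ≠ 0 := hy.1.2
    simp only at hxy
    omega
  refine (ha.image hinj).mono ?_
  rintro _ ⟨i, ⟨⟨hi1, hi2⟩, hi3⟩, rfl⟩
  have hi0 : i ≠ 0 := hi2
  refine (occursAt_cons u).2 ⟨hi3, ?_⟩
  have : i - 1 + 1 = i := by omega
  rw [this]
  exact hi1

lemma exists_concat_occursInf [Finite A] {w : List A} (h : OccursInf u w) :
    ∃ c, OccursInf u (w ++ [c]) := by
  obtain ⟨c, hc⟩ := pigeon h (fun i => u (i + w.length))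
  refine ⟨c, hc.mono ?_⟩
  rintro i ⟨hi1, hi2⟩
  exact (occursAt_concat u).2 ⟨hi1, hi2⟩

lemma finite_len [Finite A] (n : ℕ) : {l : List A | l.length = n}.Finite := by
  refine Set.Finite.subset (Set.finite_range (fun f : Fin n → A => List.ofFn f)) ?_
  intro l hl
  have hl' : l.length = n := hl
  refine ⟨fun i => l.get (Fin.cast hl'.symm i), ?_⟩
  apply List.ext_getElem (by simp [hl'])
  intro k h1 h2
  simp

lemma exists_bound [Finite A] (n : ℕ) : ∃ N, ∀ i, N ≤ i → OccursInf u (factorAt u n i) := by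
  have hfin : {i | ¬ OccursInf u (factorAt u n i)}.Finite := by
    have hsub : {i | ¬ OccursInf u (factorAt u n i)} ⊆
        ⋃ w ∈ {l : List A | l.length = n ∧ ¬ OccursInf u l}, {i | OccursAt u w i} := by
      intro i hi
      exact Set.mem_biUnion ⟨factorAt_length u n i, hi⟩ (occursAt_factorAt u n i)
    refine Set.Finite.subset (Set.Finite.biUnion ?_ ?_) hsub
    · exact (finite_len n).subset fun l hl => hl.1
    · intro w hw
      exact Set.not_infinite.1 hw.2
  obtain ⟨N, hN⟩ := hfin.bddAbove
  refine ⟨N + 1, fun i hi => ?_⟩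
  by_contra hcon
  exact absurd (hN hcon) (by omega)

lemma eventuallyPeriodic_of_no_leftSpecial [Finite A] (n : ℕ)
    (H : ∀ (w : List A) (a b : A), n ≤ w.length →
      OccursInf u (a :: w) → OccursInf u (b :: w) → a = b) :
    EventuallyPeriodic u := by
  classical
  set S : ℕ → Set (List A) := fun m => {w | w.length = m ∧ OccursInf u w} with hS
  have hfin : ∀ m, (S m).Finite := fun m => (finite_len m).subset fun l hl => hl.1
  have htail_im : List.tail '' S (n+1) = S n := by
    apply Set.Subset.antisymm
    · rintro _ ⟨w, ⟨hw1, hw2⟩, rfl⟩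
      match w, hw1, hw2 with
      | a :: v, hw1, hw2 =>
        exact ⟨by simpa using hw1, occursInf_of_cons u hw2⟩
    · rintro w ⟨hw1, hw2⟩
      obtain ⟨a, ha⟩ := exists_cons_occursInf u hw2
      exact ⟨a :: w, ⟨by simp [hw1], ha⟩, rfl⟩
  have htail_inj : Set.InjOn List.tail (S (n+1)) := by
    rintro w1 ⟨h11, h12⟩ w2 ⟨h21, h22⟩ heq
    match w1, w2, h11, h12, h21, h22, heq with
    | a :: v1, b :: v2, h11, h12, h21, h22, heq =>
      simp only [List.tail_cons] at heq
      subst heq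
      have hab : a = b := H v1 a b (by simp at h11; omega) h12 h22
      rw [hab]
  have hdrop_im : List.dropLast '' S (n+1) = S n := by
    apply Set.Subset.antisymm
    · rintro _ ⟨w, ⟨hw1, hw2⟩, rfl⟩
      have hne : w ≠ [] := by intro h; rw [h] at hw1; simp at hw1
      have hw' : w.dropLast ++ [w.getLast hne] = w := List.dropLast_append_getLast hne
      refine ⟨?_, ?_⟩
      · rw [List.length_dropLast, hw1]; omega
      · exact occursInf_of_concat u (by rw [hw']; exact hw2)
    · rintro w ⟨hw1, hw2⟩
      obtain ⟨c, hc⟩ := exists_concat_occursInf u hw2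
      exact ⟨w ++ [c], ⟨by simp [hw1], hc⟩, by simp⟩
  have hcard : (S n).ncard = (S (n+1)).ncard := by
    rw [← htail_im]
    exact Set.ncard_image_of_injOn htail_inj
  have hdrop_inj : Set.InjOn List.dropLast (S (n+1)) :=
    Set.injOn_of_ncard_image_eq (by rw [hdrop_im, hcard]) (hfin (n+1))
  have huniq : ∀ (w : List A) (c d : A), w.length = n → OccursInf u (w ++ [c]) →
      OccursInf u (w ++ [d]) → c = d := by
    intro w c d hwl hc hd
    have h1 : w ++ [c] ∈ S (n+1) := ⟨by simp [hwl], hc⟩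
    have h2 : w ++ [d] ∈ S (n+1) := ⟨by simp [hwl], hd⟩
    have := hdrop_inj h1 h2 (by simp)
    simpa using this
  obtain ⟨N, hN⟩ := exists_bound u (n+1)
  have hdet : ∀ k l, N ≤ k → N ≤ l → factorAt u n k = factorAt u n l →
      u (k + n) = u (l + n) := by
    intro k l hk hl hkl
    refine huniq (factorAt u n k) (u (k+n)) (u (l+n)) (factorAt_length u n k) ?_ ?_
    · rw [← factorAt_succ_right]; exact hN k hk
    · rw [hkl, ← factorAt_succ_right]; exact hN l hl
  haveI : Finite {l : List A // l.length = n} := (finite_len (A := A) n).to_subtype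
  obtain ⟨b, hb⟩ := pigeon (Set.Ici_infinite N)
    (fun i => (⟨factorAt u n i, factorAt_length u n i⟩ : {l : List A // l.length = n}))
  obtain ⟨i, hi⟩ := hb.nonempty
  obtain ⟨j, hj, hij⟩ := hb.exists_gt i
  have hiN : N ≤ i := hi.1
  have hjN : N ≤ j := hj.1
  have hfac : factorAt u n i = factorAt u n j :=
    congrArg Subtype.val (hi.2.trans hj.2.symm)
  have hprop : ∀ m, factorAt u n (i + m) = factorAt u n (j + m) := by
    intro m
    induction m with
    | zero => simpa using hfac
    | succ m ih =>
      have hu' : u (i + m + n) = u (j + m + n) := hdet _ _ (by omega) (by omega) ih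
      have e1 : u (i+m) :: factorAt u n (i + m + 1) = factorAt u n (i+m) ++ [u (i+m+n)] := by
        rw [← factorAt_succ_left, ← factorAt_succ_right]
      have e2 : u (j+m) :: factorAt u n (j + m + 1) = factorAt u n (j+m) ++ [u (j+m+n)] := by
        rw [← factorAt_succ_left, ← factorAt_succ_right]
      have e3 : u (i+m) :: factorAt u n (i+m+1) = u (j+m) :: factorAt u n (j+m+1) := by
        rw [e1, e2, ih, hu']
      exact (List.cons_eq_cons.mp e3).2
  refine ⟨i + n, j - i, by omega, fun k hk => ?_⟩
  obtain ⟨m, rfl⟩ : ∃ m, k = i + n + m := ⟨k - (i+n), by omega⟩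
  have h1 := hdet (i + m) (j + m) (by omega) (by omega) (hprop m)
  calc u (i + n + m + (j - i)) = u (j + m + n) := by
        rw [show i + n + m + (j - i) = j + m + n from by omega]
    _ = u (i + m + n) := h1.symm
    _ = u (i + n + m) := by rw [show i + m + n = i + n + m from by omega]

lemma exists_special [Finite A] (hu : ¬ EventuallyPeriodic u) (n : ℕ) :
    ∃ (w : List A) (a b : A), w.length = n ∧ a ≠ b ∧
      OccursInf u (a :: w) ∧ OccursInf u (b :: w) := by
  by_contra hcon
  push_neg at hcon
  apply hu
  apply eventuallyPeriodic_of_no_leftSpecial u n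
  intro w a b hlen ha hb
  by_contra hab
  obtain ⟨q, hq⟩ := List.take_prefix n w
  have ha' : OccursInf u (a :: w.take n) :=
    occursInf_prefix u ha ⟨q, by rw [List.cons_append, hq]⟩
  have hb' : OccursInf u (b :: w.take n) :=
    occursInf_prefix u hb ⟨q, by rw [List.cons_append, hq]⟩
  exact hcon (w.take n) a b (by rw [List.length_take]; omega) hab ha' hb'

end Aux

/-- for an aperiodic `u` there is a right-sided sequence `x` and two
distinct letters `a, b` such that `a·(prefix of x)` and `b·(prefix of x)` occur
infinitely many times in `u`, for every prefix of `x`. -/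
theorem stmt6 {A : Type*} [Fintype A] (u : ℕ → A) (hu : ¬ EventuallyPeriodic u) :
    ∃ (x : ℕ → A) (a b : A), a ≠ b ∧
      ∀ n : ℕ, OccursInf u (a :: factorAt x n 0) ∧ OccursInf u (b :: factorAt x n 0) := by
  classical
  have hspec := exists_special u hu
  choose w a b hw hab ha hb using hspec
  obtain ⟨p, hp⟩ := pigeon (Set.infinite_univ (α := ℕ)) (fun n => (a n, b n))
  obtain ⟨n1, hn1⟩ := hp.nonempty
  set a0 := p.1 with ha0
  set b0 := p.2 with hb0
  have hn1a : a n1 = a0 := by rw [ha0, ← hn1.2]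
  have hn1b : b n1 = b0 := by rw [hb0, ← hn1.2]
  have hab0 : a0 ≠ b0 := by rw [← hn1a, ← hn1b]; exact hab n1
  -- every length is realized
  have hTlevel : ∀ n, ∃ v : List A, v.length = n ∧
      OccursInf u (a0 :: v) ∧ OccursInf u (b0 :: v) := by
    intro n
    obtain ⟨m, hm, hnm⟩ := hp.exists_gt n
    have hma : a m = a0 := by rw [ha0, ← hm.2]
    have hmb : b m = b0 := by rw [hb0, ← hm.2]
    obtain ⟨q, hq⟩ := List.take_prefix n (w m)
    refine ⟨(w m).take n, by rw [List.length_take, hw m]; omega, ?_, ?_⟩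
    · rw [← hma]
      exact occursInf_prefix u (ha m) ⟨q, by rw [List.cons_append, hq]⟩
    · rw [← hmb]
      exact occursInf_prefix u (hb m) ⟨q, by rw [List.cons_append, hq]⟩
  -- extendibility
  set T : List A → Prop :=
    fun v => OccursInf u (a0 :: v) ∧ OccursInf u (b0 :: v) with hT
  have hTpre : ∀ (v q : List A), T (v ++ q) → T v := by
    rintro v q ⟨h1, h2⟩
    exact ⟨occursInf_prefix u h1 ⟨q, by rw [List.cons_append]⟩,
      occursInf_prefix u h2 ⟨q, by rw [List.cons_append]⟩⟩
  set Ext : List A → Prop := fun v => ∀ m, ∃ q : List A, q.length = m ∧ T (v ++ q) with hE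
  have hExtNil : Ext [] := by
    intro m
    obtain ⟨v, h1, h2, h3⟩ := hTlevel m
    exact ⟨v, h1, by rw [List.nil_append]; exact ⟨h2, h3⟩⟩
  have hExtStep : ∀ v, Ext v → ∃ c, Ext (v ++ [c]) := by
    intro v hv
    by_contra hcon2
    push_neg at hcon2
    have hc : ∀ c : A, ∃ m, ∀ q : List A, q.length = m → ¬ T ((v ++ [c]) ++ q) := by
      intro c
      have h := hcon2 c
      replace h : ¬ ∀ m, ∃ q : List A, q.length = m ∧ T ((v ++ [c]) ++ q) := h
      push_neg at h
      exact h
    choose m hm using hc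
    obtain ⟨q, hq1, hq2⟩ := hv (Finset.univ.sup m + 1)
    match q, hq1, hq2 with
    | c :: q', hq1, hq2 =>
      have hle : m c ≤ Finset.univ.sup m := Finset.le_sup (Finset.mem_univ c)
      have hq'len : q'.length = Finset.univ.sup m := by
        simp only [List.length_cons] at hq1; omega
      refine hm c (q'.take (m c)) (by rw [List.length_take]; omega) ?_
      refine hTpre _ (q'.drop (m c)) ?_
      have hassoc : (((v ++ [c]) ++ q'.take (m c)) ++ q'.drop (m c)) = v ++ (c :: q') := by
        rw [List.append_assoc, List.take_append_drop]
        simp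
      rw [hassoc]
      exact hq2
  -- build the branch
  have hstep' : ∀ v : List A, ∃ c, Ext v → Ext (v ++ [c]) := by
    intro v
    by_cases h : Ext v
    · obtain ⟨c, hc⟩ := hExtStep v h
      exact ⟨c, fun _ => hc⟩
    · exact ⟨a0, fun h' => absurd h' h⟩
  choose st hst using hstep'
  set F : ℕ → List A := fun n => Nat.rec [] (fun _ v => v ++ [st v]) n with hF
  have hFs : ∀ n, F (n+1) = F n ++ [st (F n)] := fun n => rfl
  have hFext : ∀ n, Ext (F n) := by
    intro n
    induction n with
    | zero => exact hExtNil
    | succ n ih => rw [hFs]; exact hst (F n) ih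
  have hFlen : ∀ n, (F n).length = n := by
    intro n
    induction n with
    | zero => rfl
    | succ n ih => rw [hFs]; simp [ih]
  set x : ℕ → A := fun k => (F (k+1)).getD k a0 with hx
  have hxF : ∀ n, factorAt x n 0 = F n := by
    intro n
    induction n with
    | zero => rfl
    | succ n ih =>
      rw [factorAt_succ_right, ih, hFs]
      congr 2
      rw [hx]
      simp only [Nat.zero_add]
      show (F (n+1)).getD n a0 = st (F n)
      rw [hFs, List.getD_append_right _ _ _ _ (by rw [hFlen])]
      rw [hFlen]
      simp
  refine ⟨x, a0, b0, hab0, fun n => ?_⟩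
  rw [hxF n]
  obtain ⟨q, hq1, hq2⟩ := hFext n 0
  rw [List.length_eq_zero_iff] at hq1
  subst hq1
  rw [List.append_nil] at hq2
  exact hq2

end ReflPaper
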